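/- arXiv:2308.00335 — 3 statements merged into one kernel-verified Lean document; each statement's English description precedes it below -/
import Mathlib

section
/- If ξ is an integrable random variable measurable with respect to F_s = σ(F_s^W ∪ F_s^M), where F^W and F^M are independent filtrations, then the conditional expectation of ξ given F_t^M equals the conditional expectation of ξ given F_s^M, for all t ≥ s. -/
open MeasureTheory ProbabilityTheory Set Filter
open scoped NNReal ENNReal

section Aux

variable {Ω : Type*} {m₁ m₂ mH : MeasurableSpace Ω} [m0 : MeasurableSpace Ω]
  {μ : Measure Ω} [IsProbabilityMeasure μ]

/-- Self-adjointness trick: `∫_A E[h|m₂] = ∫ h · E[1_A|m₂]`. -/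
lemma aux_flip (hm₂ : m₂ ≤ m0) {A : Set Ω} (hA : MeasurableSet[m0] A)
    {h : Ω → ℝ} (hh : Integrable h μ) :
    ∫ x in A, (μ[h|m₂]) x ∂μ
      = ∫ x, h x * (μ[A.indicator (fun _ => (1:ℝ))|m₂]) x ∂μ := by
  set g := μ[A.indicator (fun _ => (1:ℝ))|m₂] with hgdef
  set u := μ[h|m₂] with hudef
  have hind_int : Integrable (A.indicator (fun _ => (1:ℝ))) μ :=
    (integrable_const (1:ℝ)).indicator hA
  have hg_sm : StronglyMeasurable[m₂] g := stronglyMeasurable_condExp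
  have hg_bdd : ∀ᵐ x ∂μ, ‖g x‖ ≤ ((1:ℝ≥0) : ℝ) := by
    have : ∀ᵐ x ∂μ, |(A.indicator (fun _ => (1:ℝ))) x| ≤ ((1:ℝ≥0) : ℝ) := by
      refine Eventually.of_forall fun x => ?_
      by_cases hx : x ∈ A <;> simp [Set.indicator_apply, hx]
    filter_upwards [ae_bdd_condExp_of_ae_bdd this] with x hx
    simpa [Real.norm_eq_abs] using hx
  -- integrability facts
  have hmul1 : Integrable (u * A.indicator (fun _ => (1:ℝ))) μ := by
    have : Integrable (fun x => (A.indicator (fun _ => (1:ℝ))) x * u x) μ := by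
      refine Integrable.bdd_mul (c := 1) integrable_condExp
        hind_int.aestronglyMeasurable (Eventually.of_forall fun x => ?_)
      by_cases hx : x ∈ A <;> simp [Set.indicator_apply, hx]
    exact this.congr (Eventually.of_forall fun x => mul_comm _ _)
  have hmul2 : Integrable (g * h) μ := by
    refine Integrable.bdd_mul (c := ((1:ℝ≥0) : ℝ)) hh
      (hg_sm.mono hm₂).aestronglyMeasurable hg_bdd
  -- left side
  have h1 : ∫ x in A, u x ∂μ = ∫ x, u x * A.indicator (fun _ => (1:ℝ)) x ∂μ := by
    rw [← integral_indicator hA]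
    congr 1; funext x
    by_cases hx : x ∈ A <;> simp [Set.indicator_apply, hx]
  have h2 : ∫ x, (u * A.indicator (fun _ => (1:ℝ))) x ∂μ = ∫ x, u x * g x ∂μ := by
    rw [← integral_condExp hm₂ (f := u * A.indicator (fun _ => (1:ℝ)))]
    refine integral_congr_ae ?_
    exact condExp_mul_of_stronglyMeasurable_left stronglyMeasurable_condExp hmul1 hind_int
  -- right side
  have h3 : ∫ x, h x * g x ∂μ = ∫ x, g x * u x ∂μ := by
    have : ∫ x, (g * h) x ∂μ = ∫ x, g x * u x ∂μ := by
      rw [← integral_condExp hm₂ (f := g * h)]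
      refine integral_congr_ae ?_
      exact condExp_mul_of_stronglyMeasurable_left hg_sm hmul2 hh
    rw [← this]
    exact integral_congr_ae (Eventually.of_forall fun x => mul_comm _ _)
  rw [h1, h3]
  calc ∫ x, u x * A.indicator (fun _ => (1:ℝ)) x ∂μ
      = ∫ x, u x * g x ∂μ := h2
    _ = ∫ x, g x * u x ∂μ :=
        integral_congr_ae (Eventually.of_forall fun x => mul_comm _ _)

/-- Set-level identity: for `t ∈ m₁ ⊔ m₂` and `A ∈ mH` with `m₁ ⟂ mH`, `m₂ ≤ mH`,
`μ(t ∩ A) = ∫_t E[1_A|m₂]`. -/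
lemma aux_set (hm₁ : m₁ ≤ m0) (hm₂H : m₂ ≤ mH) (hH : mH ≤ m0)
    (hindep : Indep m₁ mH μ) {A : Set Ω} (hA : MeasurableSet[mH] A) :
    ∀ t : Set Ω, MeasurableSet[m₁ ⊔ m₂] t →
      (μ (t ∩ A)).toReal = ∫ x in t, (μ[A.indicator (fun _ => (1:ℝ))|m₂]) x ∂μ := by
  have hm₂ : m₂ ≤ m0 := hm₂H.trans hH
  have hm' : m₁ ⊔ m₂ ≤ m0 := sup_le hm₁ hm₂
  have hAm0 : MeasurableSet[m0] A := hH _ hA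
  set g := μ[A.indicator (fun _ => (1:ℝ))|m₂] with hgdef
  have hind_int : Integrable (A.indicator (fun _ => (1:ℝ))) μ :=
    (integrable_const (1:ℝ)).indicator hAm0
  have hg_int : Integrable g μ := integrable_condExp
  have hg_sm : StronglyMeasurable[m₂] g := stronglyMeasurable_condExp
  have hintg : ∫ x, g x ∂μ = (μ A).toReal := by
    rw [integral_condExp hm₂, integral_indicator hAm0]
    simp [measureReal_def]
  -- the π-system
  set S : Set (Set Ω) :=
    {u | ∃ u₁ u₂, MeasurableSet[m₁] u₁ ∧ MeasurableSet[m₂] u₂ ∧ u = u₁ ∩ u₂} with hSdef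
  have h_eq : (m₁ ⊔ m₂) = MeasurableSpace.generateFrom S := by
    refine le_antisymm (sup_le ?_ ?_) (MeasurableSpace.generateFrom_le ?_)
    · intro u hu
      exact MeasurableSpace.measurableSet_generateFrom
        ⟨u, Set.univ, hu, MeasurableSet.univ, by simp⟩
    · intro u hu
      exact MeasurableSpace.measurableSet_generateFrom
        ⟨Set.univ, u, MeasurableSet.univ, hu, by simp⟩
    · rintro u ⟨u₁, u₂, h1, h2, rfl⟩
      exact (MeasurableSet.inter (le_sup_left (a := m₁) (b := m₂) _ h1)
        (le_sup_right (a := m₁) (b := m₂) _ h2))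
  have h_inter : IsPiSystem S := by
    rintro u ⟨u₁, u₂, h1, h2, rfl⟩ v ⟨v₁, v₂, h3, h4, rfl⟩ _
    exact ⟨u₁ ∩ v₁, u₂ ∩ v₂, h1.inter h3, h2.inter h4, Set.inter_inter_inter_comm _ _ _ _⟩
  refine fun t ht => @MeasurableSpace.induction_on_inter Ω (m₁ ⊔ m₂)
    (fun t _ => (μ (t ∩ A)).toReal = ∫ x in t, g x ∂μ) S h_eq h_inter
    ?_ ?_ ?_ ?_ t ht
  · simp
  · -- π-sets
    rintro u ⟨u₁, u₂, h1, h2, rfl⟩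
    have h1m0 : MeasurableSet[m0] u₁ := hm₁ _ h1
    have h2m0 : MeasurableSet[m0] u₂ := hm₂ _ h2
    -- independence computation for the measure side
    have hμ : μ (u₁ ∩ u₂ ∩ A) = μ u₁ * μ (u₂ ∩ A) := by
      rw [Set.inter_assoc]
      exact (Indep_iff _ _ _).1 hindep u₁ (u₂ ∩ A) h1 ((hm₂H _ h2).inter hA)
    -- independent functions computation for the integral side
    set X : Ω → ℝ := u₁.indicator (fun _ => (1:ℝ)) with hXdef
    set Y : Ω → ℝ := fun x => u₂.indicator (fun _ => (1:ℝ)) x * g x with hYdef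
    have hXmeas : Measurable[m₁] X := measurable_const.indicator h1
    have hYmeas : Measurable[m₂] Y :=
      (measurable_const.indicator h2).mul hg_sm.measurable
    have hindep₁₂ : Indep m₁ m₂ μ := indep_of_indep_of_le_right hindep hm₂H
    have hXY : IndepFun X Y μ := by
      rw [IndepFun_iff_Indep]
      exact indep_of_indep_of_le_left
        (indep_of_indep_of_le_right hindep₁₂ hYmeas.comap_le) hXmeas.comap_le
    have hXint : Integrable X μ := (integrable_const (1:ℝ)).indicator h1m0
    have hYint : Integrable Y μ := by
      refine Integrable.bdd_mul (c := 1) hg_int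
        ((integrable_const (1:ℝ)).indicator h2m0).aestronglyMeasurable
        (Eventually.of_forall fun x => ?_)
      by_cases hx : x ∈ u₂ <;> simp [Set.indicator_apply, hx]
    have hXY_int : ∫ x, X x * Y x ∂μ = (∫ x, X x ∂μ) * ∫ x, Y x ∂μ :=
      hXY.integral_mul_eq_mul_integral hXint.aestronglyMeasurable hYint.aestronglyMeasurable
    have hXval : ∫ x, X x ∂μ = (μ u₁).toReal := by
      rw [hXdef, integral_indicator_const (1:ℝ) h1m0]; simp [measureReal_def]
    have hYval : ∫ x, Y x ∂μ = (μ (u₂ ∩ A)).toReal := by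
      have : ∫ x, Y x ∂μ = ∫ x in u₂, g x ∂μ := by
        rw [← integral_indicator h2m0]
        refine integral_congr_ae (Eventually.of_forall fun x => ?_)
        by_cases hx : x ∈ u₂ <;> simp [hYdef, Set.indicator_apply, hx]
      rw [this, hgdef, setIntegral_condExp hm₂ hind_int h2,
        setIntegral_indicator hAm0]
      simp [Set.inter_comm, measureReal_def]
    have hLHS : ∫ x in u₁ ∩ u₂, g x ∂μ = ∫ x, X x * Y x ∂μ := by
      rw [← integral_indicator (h1m0.inter h2m0)]
      refine integral_congr_ae (Eventually.of_forall fun x => ?_)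
      by_cases hx1 : x ∈ u₁ <;> by_cases hx2 : x ∈ u₂ <;>
        simp [hXdef, hYdef, Set.indicator_apply, hx1, hx2, mul_assoc]
    rw [hLHS, hXY_int, hXval, hYval, hμ, ENNReal.toReal_mul]
  · -- complements
    intro u hu hC
    have hum0 : MeasurableSet[m0] u := hm' _ hu
    have hadd : μ (u ∩ A) + μ (uᶜ ∩ A) = μ A := by
      have := measure_inter_add_diff A hum0 (μ := μ)
      rw [Set.inter_comm, Set.diff_eq, Set.inter_comm A uᶜ] at this
      exact this
    have hadd' : (μ (u ∩ A)).toReal + (μ (uᶜ ∩ A)).toReal = (μ A).toReal := by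
      rw [← ENNReal.toReal_add (measure_ne_top _ _) (measure_ne_top _ _), hadd]
    have hintadd : (∫ x in u, g x ∂μ) + ∫ x in uᶜ, g x ∂μ = (μ A).toReal := by
      rw [integral_add_compl hum0 hg_int, hintg]
    rw [← hC] at hintadd
    linarith
  · -- disjoint unions
    intro f hdisj hfm hCf
    have hfm0 : ∀ i, MeasurableSet[m0] (f i) := fun i => hm' _ (hfm i)
    have hμ : μ ((⋃ i, f i) ∩ A) = ∑' i, μ (f i ∩ A) := by
      rw [Set.iUnion_inter]
      exact measure_iUnion
        (fun i j hij => (hdisj hij).mono Set.inter_subset_left Set.inter_subset_left)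
        (fun i => (hfm0 i).inter hAm0)
    have hI : ∫ x in ⋃ i, f i, g x ∂μ = ∑' i, ∫ x in f i, g x ∂μ :=
      integral_iUnion hfm0 hdisj hg_int.integrableOn
    rw [hμ, hI, ENNReal.tsum_toReal_eq (fun i => measure_ne_top _ _)]
    exact tsum_congr fun i => hCf i

/-- Main auxiliary result: if `ξ` is `m₁ ⊔ m₂`-measurable and integrable, `m₁ ⟂ mH`,
`m₂ ≤ mH`, then for any `A ∈ mH`, `∫_A ξ = ∫_A E[ξ|m₂]`. -/
lemma aux_setIntegral (hm₁ : m₁ ≤ m0) (hm₂H : m₂ ≤ mH) (hH : mH ≤ m0)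
    (hindep : Indep m₁ mH μ) {ξ : Ω → ℝ} (hmeas : Measurable[m₁ ⊔ m₂] ξ)
    (hint : Integrable ξ μ) {A : Set Ω} (hA : MeasurableSet[mH] A) :
    ∫ x in A, ξ x ∂μ = ∫ x in A, (μ[ξ|m₂]) x ∂μ := by
  have hm₂ : m₂ ≤ m0 := hm₂H.trans hH
  have hm' : m₁ ⊔ m₂ ≤ m0 := sup_le hm₁ hm₂
  have hAm0 : MeasurableSet[m0] A := hH _ hA
  set g := μ[A.indicator (fun _ => (1:ℝ))|m₂] with hgdef
  have hg_nonneg : 0 ≤ᵐ[μ] g := by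
    refine condExp_nonneg (Eventually.of_forall fun x => ?_)
    by_cases hx : x ∈ A <;> simp [Set.indicator_apply, hx]
  have hg_meas : Measurable g := (stronglyMeasurable_condExp.mono hm₂).measurable
  have hgnn_meas : Measurable fun x => (g x).toNNReal := hg_meas.real_toNNReal
  have hsm : StronglyMeasurable[m₁ ⊔ m₂] ξ := hmeas.stronglyMeasurable
  -- RHS via self-adjointness
  rw [aux_flip hm₂ hAm0 hint, ← hgdef]
  -- LHS via the trim argument
  set ν : Measure Ω := μ.withDensity fun x => ((g x).toNNReal : ℝ≥0∞) with hνdef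
  have htrim : (μ.restrict A).trim hm' = ν.trim hm' := by
    refine @Measure.ext Ω (m₁ ⊔ m₂) _ _ fun B hB => ?_
    rw [trim_measurableSet_eq hm' hB, trim_measurableSet_eq hm' hB,
      Measure.restrict_apply (hm' _ hB), hνdef, withDensity_apply _ (hm' _ hB)]
    have hset := aux_set hm₁ hm₂H hH hindep hA B hB
    have h0 : ∫⁻ x in B, ((g x).toNNReal : ℝ≥0∞) ∂μ
        = ENNReal.ofReal (∫ x in B, g x ∂μ) := by
      rw [ofReal_integral_eq_lintegral_ofReal integrable_condExp.integrableOn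
        (ae_restrict_of_ae hg_nonneg)]
      rfl
    rw [h0, ← hset, ENNReal.ofReal_toReal (measure_ne_top _ _)]
  have h1 : ∫ x in A, ξ x ∂μ = ∫ x, ξ x ∂ν := by
    calc ∫ x, ξ x ∂(μ.restrict A)
        = ∫ x, ξ x ∂((μ.restrict A).trim hm') := integral_trim hm' hsm
      _ = ∫ x, ξ x ∂(ν.trim hm') := by rw [htrim]
      _ = ∫ x, ξ x ∂ν := (integral_trim hm' hsm).symm
  have h2 : ∫ x, ξ x ∂ν = ∫ x, ξ x * g x ∂μ := by
    rw [hνdef, integral_withDensity_eq_integral_smul hgnn_meas]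
    refine integral_congr_ae ?_
    filter_upwards [hg_nonneg] with x hx
    simp [NNReal.smul_def, Real.coe_toNNReal _ hx, mul_comm]
  rw [h1, h2]

end Aux

/-- If `ξ` is integrable and measurable w.r.t. `F_s = σ(F_s^W ∪ F_s^M)`, where the filtrations
`F^W` and `F^M` are independent, then `E[ξ | F_t^M] = E[ξ | F_s^M]` for all `t ≥ s`. -/
theorem stmt0 {Ω : Type*} [m0 : MeasurableSpace Ω] (μ : Measure Ω) [IsProbabilityMeasure μ]
    (FW FM : ℝ → MeasurableSpace Ω)
    (hFWmono : Monotone FW) (hFMmono : Monotone FM)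
    (hFWle : ∀ t, FW t ≤ m0) (hFMle : ∀ t, FM t ≤ m0)
    (hindep : Indep (⨆ t, FW t) (⨆ t, FM t) μ)
    (s t : ℝ) (hst : s ≤ t)
    (ξ : Ω → ℝ) (hmeas : Measurable[FW s ⊔ FM s] ξ) (hint : Integrable ξ μ) :
    μ[ξ | FM t] =ᵐ[μ] μ[ξ | FM s] := by
  have hmt : FM t ≤ m0 := hFMle t
  have hMM : (⨆ u, FM u) ≤ m0 := iSup_le hFMle
  have hind : Indep (FW s) (⨆ u, FM u) μ := indep_of_indep_of_le_left hindep (le_iSup _ s)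
  refine (ae_eq_condExp_of_forall_setIntegral_eq hmt hint
    (fun B hB _ => integrable_condExp.integrableOn)
    (fun B hB _ => ?_)
    ((stronglyMeasurable_condExp.mono (hFMmono hst)).aestronglyMeasurable)).symm
  exact (aux_setIntegral (μ := μ) (hFWle s) (le_iSup FM s) hMM hind hmeas hint
    ((le_iSup FM t) B hB)).symm
end

section
/- If ξ is integrable and F_s-measurable with F_s = σ(F_s^W ∪ F_s^M), where F^W and F^M are independent filtrations, then E[ξ | F_s^M] = E[ξ | F_∞^M], where F_∞^M = σ(⋃_t F_t^M). -/
open MeasureTheory ProbabilityTheory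

/-- Key auxiliary lemma: if `m₂ ≤ m₃`, `m₁` is independent of `m₃`, and `ξ` is integrable and
`(m₁ ⊔ m₂)`-measurable, then `μ[ξ | m₃] = μ[ξ | m₂]`. -/
theorem aux_condExp_eq {Ω : Type*} {m₁ m₂ m₃ : MeasurableSpace Ω} [m0 : MeasurableSpace Ω]
    (μ : Measure Ω) [IsProbabilityMeasure μ]
    (h1 : m₁ ≤ m0) (h3 : m₃ ≤ m0) (h23 : m₂ ≤ m₃)
    (hindep : Indep m₁ m₃ μ)
    {ξ : Ω → ℝ} (hmeas : Measurable[m₁ ⊔ m₂] ξ) (hint : Integrable ξ μ) :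
    μ[ξ | m₃] =ᵐ[μ] μ[ξ | m₂] := by
  have h2 : m₂ ≤ m0 := h23.trans h3
  have h12 : m₁ ⊔ m₂ ≤ m0 := sup_le h1 h2
  -- It suffices to show `μ[ξ|m₂]` is a version of `μ[ξ|m₃]`.
  refine (ae_eq_condExp_of_forall_setIntegral_eq h3 hint
    (fun A _ _ => integrable_condExp.integrableOn) (fun A hA _ => ?_)
    (stronglyMeasurable_condExp.mono h23).aestronglyMeasurable).symm
  -- Fix `A ∈ m₃`; let `χ = 1_A` and `g = χ - μ[χ|m₂]`.
  set χ : Ω → ℝ := A.indicator (fun _ => (1 : ℝ)) with hχdef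
  have hAm0 : MeasurableSet[m0] A := h3 A hA
  have hχ_int : Integrable χ μ := (integrable_const (1 : ℝ)).indicator hAm0
  set g : Ω → ℝ := χ - μ[χ|m₂] with hgdef
  have hg_int : Integrable g μ := hχ_int.sub integrable_condExp
  have hχ_meas3 : Measurable[m₃] χ :=
    (measurable_const.indicator hA : Measurable[m₃] χ)
  have hg_meas3 : Measurable[m₃] g :=
    hχ_meas3.sub ((stronglyMeasurable_condExp.mono h23).measurable)
  -- Step 1: `∫_t g = 0` for all `t ∈ m₁ ⊔ m₂`, by the π-λ theorem.
  have hsup_eq : (m₁ ⊔ m₂) = MeasurableSpace.generateFrom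
      {t | ∃ t₁ t₂, MeasurableSet[m₁] t₁ ∧ MeasurableSet[m₂] t₂ ∧ t = t₁ ∩ t₂} := by
    refine le_antisymm (sup_le ?_ ?_) (MeasurableSpace.generateFrom_le ?_)
    · intro t ht
      exact MeasurableSpace.measurableSet_generateFrom
        ⟨t, Set.univ, ht, MeasurableSet.univ, (Set.inter_univ t).symm⟩
    · intro t ht
      exact MeasurableSpace.measurableSet_generateFrom
        ⟨Set.univ, t, MeasurableSet.univ, ht, (Set.univ_inter t).symm⟩
    · rintro t ⟨t₁, t₂, ht₁, ht₂, rfl⟩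
      exact ((le_sup_left : m₁ ≤ m₁ ⊔ m₂) _ ht₁).inter
        ((le_sup_right : m₂ ≤ m₁ ⊔ m₂) _ ht₂)
  have hpi : IsPiSystem
      {t | ∃ t₁ t₂, MeasurableSet[m₁] t₁ ∧ MeasurableSet[m₂] t₂ ∧ t = t₁ ∩ t₂} := by
    rintro u ⟨u₁, u₂, hu₁, hu₂, rfl⟩ v ⟨v₁, v₂, hv₁, hv₂, rfl⟩ -
    refine ⟨u₁ ∩ v₁, u₂ ∩ v₂, hu₁.inter hv₁, hu₂.inter hv₂, ?_⟩
    ext x; simp; tauto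
  have hzero : ∀ t, MeasurableSet[m₁ ⊔ m₂] t → ∫ x in t, g x ∂μ = 0 := by
    have h_int_total : ∫ x, g x ∂μ = 0 := by
      simp only [hgdef, Pi.sub_apply]
      rw [integral_sub hχ_int integrable_condExp, integral_condExp h2, sub_self]
    refine fun t ht => @MeasurableSpace.induction_on_inter Ω (m₁ ⊔ m₂)
      (fun t _ => ∫ x in t, g x ∂μ = 0) _ hsup_eq hpi ?_ ?_ ?_ ?_ t ht
    · simp
    · rintro u ⟨t₁, t₂, ht₁, ht₂, rfl⟩
      -- `∫_{t₁∩t₂} g = ∫ 1_{t₁} * (1_{t₂} * g)` and use independence.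
      have ht₁0 : MeasurableSet[m0] t₁ := h1 t₁ ht₁
      have ht₂0 : MeasurableSet[m0] t₂ := h2 t₂ ht₂
      have h2' : MeasurableSet[m₃] t₂ := h23 t₂ ht₂
      set φ : Ω → ℝ := t₁.indicator (fun _ => (1 : ℝ)) with hφdef
      set ψ : Ω → ℝ := t₂.indicator g with hψdef
      have hφψ : ∀ x, φ x * ψ x = (t₁ ∩ t₂).indicator g x := by
        intro x
        by_cases h1x : x ∈ t₁ <;> by_cases h2x : x ∈ t₂ <;>
          simp [hφdef, hψdef, Set.indicator_apply, h1x, h2x]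
      have hφ_meas : Measurable[m₁] φ := measurable_const.indicator ht₁
      have hψ_meas : Measurable[m₃] ψ := hg_meas3.indicator h2'
      have hIF : IndepFun φ ψ μ :=
        indep_of_indep_of_le_left
          (indep_of_indep_of_le_right hindep hψ_meas.comap_le) hφ_meas.comap_le
      have hφ_int : Integrable φ μ := (integrable_const (1 : ℝ)).indicator ht₁0
      have hψ_int : Integrable ψ μ := hg_int.indicator ht₂0
      have hψ_zero : ∫ x, ψ x ∂μ = 0 := by
        rw [hψdef, integral_indicator ht₂0, hgdef]
        simp only [Pi.sub_apply]
        rw [integral_sub hχ_int.integrableOn integrable_condExp.integrableOn,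
          setIntegral_condExp h2 hχ_int ht₂, sub_self]
      calc ∫ x in t₁ ∩ t₂, g x ∂μ = ∫ x, (t₁ ∩ t₂).indicator g x ∂μ :=
            (integral_indicator (ht₁0.inter ht₂0)).symm
        _ = ∫ x, φ x * ψ x ∂μ := by simp_rw [hφψ]
        _ = (∫ x, φ x ∂μ) * ∫ x, ψ x ∂μ := hIF.integral_mul_eq_mul_integral hφ_int.aestronglyMeasurable hψ_int.aestronglyMeasurable
        _ = 0 := by rw [hψ_zero, mul_zero]
    · intro t ht htz
      have ht0 : MeasurableSet[m0] t := h12 t ht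
      have hadd := integral_add_compl ht0 hg_int
      have hsum0 : ∫ x in t, g x ∂μ + ∫ x in tᶜ, g x ∂μ = 0 := by rw [hadd, h_int_total]
      linarith [htz, hsum0]
    · intro f hdisj hfm hfz
      have hf0 : ∀ i, MeasurableSet[m0] (f i) := fun i => h12 _ (hfm i)
      have hsum : HasSum (fun n => ∫ x in f n, g x ∂μ) (∫ x in ⋃ n, f n, g x ∂μ) :=
        hasSum_integral_iUnion hf0 hdisj hg_int.integrableOn
      simp_rw [hfz] at hsum
      simpa using hsum.tsum_eq.symm
  -- Step 2: `μ[g | m₁ ⊔ m₂] = 0` a.e.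
  have hcond_zero : μ[g | m₁ ⊔ m₂] =ᵐ[μ] 0 := by
    refine ((ae_eq_condExp_of_forall_setIntegral_eq h12 hg_int
      (fun t _ _ => (integrable_zero _ _ _).integrableOn)
      (fun t ht _ => by simp [hzero t ht])
      (stronglyMeasurable_zero.aestronglyMeasurable))).symm
  -- bound on the conditional expectation of the indicator
  have hχ_bound : ∀ᵐ x ∂μ, ‖(μ[χ|m₂]) x‖ ≤ 1 := by
    have h0 : (0 : Ω → ℝ) ≤ χ := fun x => Set.indicator_nonneg (fun _ _ => zero_le_one) x
    have h1' : χ ≤ fun _ => (1 : ℝ) := fun x => Set.indicator_le' (fun _ _ => le_rfl)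
      (fun _ _ => zero_le_one) x
    have hle : μ[χ|m₂] ≤ᵐ[μ] μ[(fun _ => (1:ℝ))|m₂] :=
      condExp_mono hχ_int (integrable_const 1) (Filter.Eventually.of_forall fun x => h1' x)
    have hge : μ[(0 : Ω → ℝ)|m₂] ≤ᵐ[μ] μ[χ|m₂] :=
      condExp_mono (integrable_zero _ _ _) hχ_int (Filter.Eventually.of_forall fun x => h0 x)
    have hconst : μ[(fun _ => (1:ℝ))|m₂] = fun _ => (1:ℝ) := condExp_const h2 (1:ℝ)
    have hzero' : μ[(0 : Ω → ℝ)|m₂] = 0 := condExp_zero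
    rw [hconst] at hle
    rw [hzero'] at hge
    filter_upwards [hle, hge] with x hx1 hx2
    rw [Real.norm_eq_abs, abs_le]
    refine ⟨by simpa using hx2.trans' (by norm_num), hx1⟩
  -- Integrability of the products
  have hξχ_int : Integrable (fun x => ξ x * χ x) μ := by
    have : (fun x => ξ x * χ x) = A.indicator ξ := by
      funext x
      by_cases hx : x ∈ A <;> simp [hχdef, Set.indicator_apply, hx]
    rw [this]; exact hint.indicator hAm0
  have hξcond_int : Integrable (fun x => (μ[χ|m₂]) x * ξ x) μ :=
    hint.bdd_mul (stronglyMeasurable_condExp.mono h2).aestronglyMeasurable hχ_bound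
  have hξg_int : Integrable (fun x => ξ x * g x) μ := by
    have : (fun x => ξ x * g x) = fun x => ξ x * χ x - (μ[χ|m₂]) x * ξ x := by
      funext x; simp [hgdef, mul_sub, mul_comm]
    rw [this]; exact hξχ_int.sub hξcond_int
  -- Step 3: `∫ ξ g = 0`.
  have hint_ξg : ∫ x, ξ x * g x ∂μ = 0 := by
    have h1' : μ[(fun x => ξ x * g x) | m₁ ⊔ m₂] =ᵐ[μ] fun x => ξ x * (μ[g | m₁ ⊔ m₂]) x := by
      have := condExp_mul_of_stronglyMeasurable_left (m := m₁ ⊔ m₂) (μ := μ)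
        hmeas.stronglyMeasurable (f := ξ) (g := g) hξg_int hg_int
      exact this
    have h2' : μ[(fun x => ξ x * g x) | m₁ ⊔ m₂] =ᵐ[μ] 0 := by
      refine h1'.trans ?_
      filter_upwards [hcond_zero] with x hx
      simp [hx]
    calc ∫ x, ξ x * g x ∂μ = ∫ x, (μ[(fun x => ξ x * g x) | m₁ ⊔ m₂]) x ∂μ :=
          (integral_condExp h12).symm
      _ = ∫ x, (0 : Ω → ℝ) x ∂μ := integral_congr_ae h2'
      _ = 0 := by simp
  -- Step 4: `∫ ξ μ[χ|m₂] = ∫ μ[ξ|m₂] χ`.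
  have hswap : ∫ x, (μ[χ|m₂]) x * ξ x ∂μ = ∫ x, (μ[ξ|m₂]) x * χ x ∂μ := by
    have hl : ∫ x, (μ[χ|m₂]) x * ξ x ∂μ = ∫ x, (μ[χ|m₂]) x * (μ[ξ|m₂]) x ∂μ := by
      rw [← integral_condExp h2 (f := fun x => (μ[χ|m₂]) x * ξ x)]
      refine integral_congr_ae ?_
      exact condExp_mul_of_stronglyMeasurable_left stronglyMeasurable_condExp hξcond_int hint
    have hcondχ_int : Integrable (fun x => (μ[ξ|m₂]) x * χ x) μ := by
      have : (fun x => (μ[ξ|m₂]) x * χ x) = A.indicator (μ[ξ|m₂]) := by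
        funext x
        by_cases hx : x ∈ A <;> simp [hχdef, Set.indicator_apply, hx]
      rw [this]; exact integrable_condExp.indicator hAm0
    have hr : ∫ x, (μ[ξ|m₂]) x * χ x ∂μ = ∫ x, (μ[ξ|m₂]) x * (μ[χ|m₂]) x ∂μ := by
      rw [← integral_condExp h2 (f := fun x => (μ[ξ|m₂]) x * χ x)]
      refine integral_congr_ae ?_
      exact condExp_mul_of_stronglyMeasurable_left stronglyMeasurable_condExp hcondχ_int hχ_int
    rw [hl, hr]
    simp_rw [mul_comm]
  -- Conclusion.
  have hAξ : ∫ x in A, ξ x ∂μ = ∫ x, ξ x * χ x ∂μ := by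
    rw [← integral_indicator hAm0]
    refine integral_congr_ae (Filter.Eventually.of_forall fun x => ?_)
    by_cases hx : x ∈ A <;> simp [hχdef, Set.indicator_apply, hx]
  have hAcond : ∫ x in A, (μ[ξ|m₂]) x ∂μ = ∫ x, (μ[ξ|m₂]) x * χ x ∂μ := by
    rw [← integral_indicator hAm0]
    refine integral_congr_ae (Filter.Eventually.of_forall fun x => ?_)
    by_cases hx : x ∈ A <;> simp [hχdef, Set.indicator_apply, hx]
  have hexp : ∫ x, ξ x * g x ∂μ = ∫ x, ξ x * χ x ∂μ - ∫ x, (μ[χ|m₂]) x * ξ x ∂μ := by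
    have : (fun x => ξ x * g x) = fun x => ξ x * χ x - (μ[χ|m₂]) x * ξ x := by
      funext x; simp [hgdef, mul_sub, mul_comm]
    rw [this, integral_sub hξχ_int hξcond_int]
  rw [hAξ, hAcond, ← hswap]
  have := hint_ξg
  rw [hexp] at this
  linarith

/-- If `ξ` is integrable and `F_s`-measurable with `F_s = σ(F_s^W ∪ F_s^M)`, where `F^W` and
`F^M` are independent filtrations, then `E[ξ | F_s^M] = E[ξ | F_∞^M]`. -/
theorem stmt1 {Ω : Type*} [m0 : MeasurableSpace Ω] (μ : Measure Ω) [IsProbabilityMeasure μ]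
    (FW FM : ℝ → MeasurableSpace Ω)
    (hFWmono : Monotone FW) (hFMmono : Monotone FM)
    (hFWle : ∀ t, FW t ≤ m0) (hFMle : ∀ t, FM t ≤ m0)
    (hindep : Indep (⨆ t, FW t) (⨆ t, FM t) μ)
    (s : ℝ)
    (ξ : Ω → ℝ) (hmeas : Measurable[FW s ⊔ FM s] ξ) (hint : Integrable ξ μ) :
    μ[ξ | FM s] =ᵐ[μ] μ[ξ | ⨆ u, FM u] := by
  have h1 : FW s ≤ m0 := hFWle s
  have h3 : (⨆ u, FM u) ≤ m0 := iSup_le hFMle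
  have h23 : FM s ≤ ⨆ u, FM u := le_iSup FM s
  have hindep' : Indep (FW s) (⨆ u, FM u) μ :=
    indep_of_indep_of_le_left hindep (le_iSup FW s)
  exact (aux_condExp_eq μ h1 h3 h23 hindep' hmeas hint).symm
end

section
/- Let U be a real Hilbert space, Ψ : U → U bounded self-adjoint with Ψ ≥ 0, ψ₁ ∈ U, and J(u) = ½(⟨Ψu,u⟩ + 2⟨ψ₁,u⟩ + ψ₀). Then J attains its minimum on U if and only if ψ₁ belongs to the range of Ψ. Moreover ū minimizes J if and only if Ψū + ψ₁ = 0. -/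
open scoped RealInnerProductSpace

/-- For `J(u) = ½(⟨Ψu,u⟩ + 2⟨ψ₁,u⟩ + ψ₀)` with `Ψ ≥ 0` bounded self-adjoint, `J` attains its
minimum iff `ψ₁ ∈ Ran(Ψ)`, and `ū` is a minimizer iff `Ψū + ψ₁ = 0`. -/
theorem stmt11 {U : Type*} [NormedAddCommGroup U] [InnerProductSpace ℝ U] [CompleteSpace U]
    (Ψ : U →L[ℝ] U) (hsa : ∀ u v : U, ⟪Ψ u, v⟫ = ⟪u, Ψ v⟫)
    (hpos : ∀ u : U, 0 ≤ ⟪Ψ u, u⟫)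
    (ψ₁ : U) (ψ₀ : ℝ) (J : U → ℝ)
    (hJ : ∀ u, J u = (1 / 2) * (⟪Ψ u, u⟫ + 2 * ⟪ψ₁, u⟫ + ψ₀)) :
    ((∃ ubar : U, ∀ u : U, J ubar ≤ J u) ↔ (∃ u : U, Ψ u = ψ₁)) ∧
    (∀ ubar : U, (∀ u : U, J ubar ≤ J u) ↔ Ψ ubar + ψ₁ = 0) := by
  -- key expansion
  have hdiff : ∀ ub v : U, J (ub + v) = J ub + ⟪Ψ ub + ψ₁, v⟫ + (1/2) * ⟪Ψ v, v⟫ := by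
    intro ub v
    have h1 : ⟪Ψ v, ub⟫ = ⟪Ψ ub, v⟫ := by rw [hsa]; exact real_inner_comm _ _
    simp only [hJ, map_add, inner_add_left, inner_add_right]
    rw [h1]; ring
  have hmin : ∀ ubar : U, (∀ u : U, J ubar ≤ J u) ↔ Ψ ubar + ψ₁ = 0 := by
    intro ubar
    constructor
    · intro hm
      set w := Ψ ubar + ψ₁ with hw
      by_contra hne
      have hwpos : 0 < ⟪w, w⟫ :=
        lt_of_le_of_ne real_inner_self_nonneg (fun h => hne (inner_self_eq_zero.mp h.symm))
      set c := ⟪Ψ w, w⟫ with hc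
      have hc0 : 0 ≤ c := hpos w
      set t := ⟪w, w⟫ / (c + 1) with ht
      have htpos : 0 < t := div_pos hwpos (by linarith)
      have key := hm (ubar + t • (-w))
      rw [hdiff ubar (t • (-w))] at key
      simp only [inner_smul_right, inner_neg_right, inner_neg_left, map_smul, map_neg,
        inner_smul_left, RCLike.ofReal_real_eq_id, id_eq, conj_trivial] at key
      -- key : J ubar ≤ J ubar + t * -⟪w, w⟫ + 1/2 * (t * (t * ⟪Ψ w, w⟫))
      have h2 : t * ⟪w, w⟫ ≤ 1/2 * (t * (t * c)) := by nlinarith [key]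
      have h3 : ⟪w, w⟫ ≤ 1/2 * (t * c) := by
        have := (mul_le_mul_iff_right₀ htpos).mp (by nlinarith : t * ⟪w,w⟫ ≤ t * (1/2 * (t * c)))
        linarith
      have h4 : t * c < ⟪w, w⟫ := by
        rw [ht, div_mul_eq_mul_div, div_lt_iff₀ (by linarith : (0:ℝ) < c + 1)]
        nlinarith
      linarith
    · intro h0 u
      have := hdiff ubar (u - ubar)
      rw [add_sub_cancel, h0] at this
      simp only [inner_zero_left] at this
      have := hpos (u - ubar)
      linarith
  refine ⟨?_, hmin⟩
  constructor
  · rintro ⟨ubar, hm⟩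
    refine ⟨-ubar, ?_⟩
    have h := (hmin ubar).mp hm
    rw [map_neg]
    rw [eq_neg_of_add_eq_zero_left h, neg_neg]
  · rintro ⟨u, hu⟩
    refine ⟨-u, (hmin (-u)).mpr ?_⟩
    rw [map_neg, hu, neg_add_cancel]
end
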